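/- Improved Bretagnolle–Huber inequality for general distributions: let P and Q be probability measures on a common measurable space (Ω, F). Then for every event A ∈ F, Q(A) ≥ P(A) − 1 + exp(−1/e) · exp(−KL(P,Q)), with the convention exp(−∞) = 0 when KL(P,Q) = +∞. -/

import Mathlib

open MeasureTheory
open scoped ENNReal Classical

/-- The Kullback-Leibler divergence between two measures, with value `+∞`
when `P` is not absolutely continuous w.r.t. `Q` or when the log-likelihood
ratio is not integrable. -/
noncomputable def KLdiv {Ω : Type*} [MeasurableSpace Ω] (P Q : Measure Ω) : ℝ≥0∞ :=
  if P ≪ Q ∧ Integrable (fun ω => Real.log (P.rnDeriv Q ω).toReal) P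
  then ENNReal.ofReal (∫ ω, Real.log (P.rnDeriv Q ω).toReal ∂P)
  else ⊤

lemma neg_inv_exp_le_mul_log {x : ℝ} (hx : 0 ≤ x) : -(1 / Real.exp 1) ≤ x * Real.log x := by
  rcases hx.eq_or_lt with rfl | hx
  · simp only [zero_mul, Real.log_zero, mul_zero]
    have : (0:ℝ) < 1 / Real.exp 1 := by positivity
    linarith
  · have h := Real.add_one_le_exp (-(Real.log x) - 1)
    rw [Real.exp_sub, Real.exp_neg, Real.exp_log hx] at h
    have h' : -Real.log x ≤ x⁻¹ / Real.exp 1 := by linarith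
    have h2 : x * (-Real.log x) ≤ x * (x⁻¹ / Real.exp 1) :=
      mul_le_mul_of_nonneg_left h' hx.le
    have h3 : x * (x⁻¹ / Real.exp 1) = 1 / Real.exp 1 := by field_simp
    linarith

/-- exp (p log q − p log p) ≤ 1 − p + q for p ∈ [0,1], q ∈ (0, ∞). -/
lemma exp_mul_log_le {p q : ℝ} (hp0 : 0 ≤ p) (hp1 : p ≤ 1) (hq : 0 < q) :
    Real.exp (p * Real.log q - p * Real.log p) ≤ 1 - p + q := by
  rcases hp0.eq_or_lt with rfl | hp
  · simp; linarith
  · have hqp : (0:ℝ) < q / p := by positivity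
    have h1 : Real.exp (p * Real.log q - p * Real.log p) = (q / p) ^ p := by
      rw [Real.rpow_def_of_pos hqp, Real.log_div hq.ne' hp.ne']
      ring_nf
    have hs : (-1:ℝ) ≤ q / p - 1 := by linarith
    have h2 : (1 + (q/p - 1)) ^ p ≤ 1 + p * (q/p - 1) :=
      rpow_one_add_le_one_add_mul_self hs hp0 hp1
    have h3 : p * (q/p - 1) = q - p := by field_simp
    rw [h1]
    calc (q/p)^p = (1 + (q/p-1))^p := by ring_nf
      _ ≤ 1 + p*(q/p-1) := h2
      _ = 1 - p + q := by rw [h3]; ring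

/-- Restricted Jensen step. -/
lemma jensen_restrict {Ω : Type*} [MeasurableSpace Ω] (P Q : Measure Ω)
    [IsProbabilityMeasure P] [IsProbabilityMeasure Q]
    (hPQ : P ≪ Q)
    (hint : Integrable (fun ω => Real.log (P.rnDeriv Q ω).toReal) P)
    {S : Set Ω} (hS : MeasurableSet S) (hQS : Q S ≠ 0) :
    (P S).toReal * Real.log ((P S).toReal) - (P S).toReal * Real.log ((Q S).toReal)
      ≤ ∫ ω in S, Real.log (P.rnDeriv Q ω).toReal ∂P := by
  set f : Ω → ℝ := fun ω => (P.rnDeriv Q ω).toReal with hf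
  set p : ℝ := (P S).toReal
  set q : ℝ := (Q S).toReal
  have hq : 0 < q := ENNReal.toReal_pos hQS (measure_ne_top _ _)
  have hp : 0 ≤ p := ENNReal.toReal_nonneg
  -- change of measure
  have hcov : ∫ ω in S, Real.log (f ω) ∂P = ∫ ω in S, f ω * Real.log (f ω) ∂Q := by
    rw [← setIntegral_rnDeriv_smul hPQ hS (f := fun ω => Real.log (f ω))]
    simp [smul_eq_mul]
    rfl
  have hgint : Integrable (fun ω => f ω * Real.log (f ω)) Q := by
    have := (integrable_rnDeriv_smul_iff hPQ
      (f := fun ω => Real.log (f ω))).mpr hint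
    simpa [smul_eq_mul] using this
  haveI : NeZero (Q.restrict S) :=
    ⟨by rwa [ne_eq, Measure.restrict_eq_zero]⟩
  have hfi : Integrable f (Q.restrict S) :=
    Measure.integrableOn_toReal_rnDeriv (measure_ne_top P S)
  have hjen := Real.convexOn_mul_log.map_average_le
    (Real.continuous_mul_log.continuousOn) isClosed_Ici
    (f := f) (μ := Q.restrict S)
    (Filter.Eventually.of_forall fun x => ENNReal.toReal_nonneg)
    hfi (hgint.restrict)
  have havg1 : ⨍ x, f x ∂(Q.restrict S) = q⁻¹ * p := by
    rw [average_eq, Measure.setIntegral_toReal_rnDeriv hPQ S]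
    simp [Measure.restrict_apply_univ, smul_eq_mul]
    rfl
  have havg2 : ⨍ x, f x * Real.log (f x) ∂(Q.restrict S)
      = q⁻¹ * ∫ ω in S, f ω * Real.log (f ω) ∂Q := by
    rw [average_eq]
    simp [Measure.restrict_apply_univ, smul_eq_mul]
    exact Or.inl rfl
  rw [havg1, havg2] at hjen
  rcases hp.eq_or_lt with hp0 | hp0
  · have hPS : P S = 0 := by
      by_contra hne
      exact (ENNReal.toReal_pos hne (measure_ne_top _ _)).ne' hp0.symm
    have hres : P.restrict S = 0 := by rwa [Measure.restrict_eq_zero]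
    rw [← hp0]
    simp only [zero_mul, sub_zero]
    rw [show (∫ ω in S, Real.log (P.rnDeriv Q ω).toReal ∂P)
        = ∫ ω, Real.log (P.rnDeriv Q ω).toReal ∂(P.restrict S) from rfl, hres]
    simp
  · rw [hcov]
    have hmul := mul_le_mul_of_nonneg_left hjen hq.le
    have hrhs : q * (q⁻¹ * ∫ ω in S, f ω * Real.log (f ω) ∂Q)
        = ∫ ω in S, f ω * Real.log (f ω) ∂Q := by field_simp
    have hlhs : q * (q⁻¹ * p * Real.log (q⁻¹ * p)) = p * Real.log p - p * Real.log q := by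
      rw [Real.log_mul (by positivity) hp0.ne', Real.log_inv]
      field_simp
      ring
    linarith

theorem improved_bretagnolle_huber {Ω : Type*} [MeasurableSpace Ω]
    (P Q : Measure Ω) [IsProbabilityMeasure P] [IsProbabilityMeasure Q]
    (A : Set Ω) (hA : MeasurableSet A) :
    (Q A).toReal ≥
      (P A).toReal - 1 +
        Real.exp (-(1 / Real.exp 1)) *
          (if KLdiv P Q = ⊤ then 0 else Real.exp (-(KLdiv P Q).toReal)) := by
  set p : ℝ := (P A).toReal with hpdef
  set q : ℝ := (Q A).toReal with hqdef
  have hp0 : 0 ≤ p := ENNReal.toReal_nonneg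
  have hq0 : 0 ≤ q := ENNReal.toReal_nonneg
  have hp1 : p ≤ 1 := by
    rw [hpdef, show (1:ℝ) = (1:ℝ≥0∞).toReal by simp]
    exact ENNReal.toReal_mono ENNReal.one_ne_top prob_le_one
  by_cases hK : KLdiv P Q = ⊤
  · rw [if_pos hK]
    simp only [mul_zero, ge_iff_le]
    linarith
  · rw [if_neg hK]
    have hcond : P ≪ Q ∧ Integrable (fun ω => Real.log (P.rnDeriv Q ω).toReal) P := by
      by_contra h
      exact hK (by rw [KLdiv, if_neg h])
    obtain ⟨hPQ, hint⟩ := hcond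
    set K : ℝ := ∫ ω, Real.log (P.rnDeriv Q ω).toReal ∂P with hKdef
    have hKval : (KLdiv P Q).toReal = (ENNReal.ofReal K).toReal := by
      rw [KLdiv, if_pos ⟨hPQ, hint⟩]
    have hKr0 : 0 ≤ (KLdiv P Q).toReal := ENNReal.toReal_nonneg
    have hKle : K ≤ (KLdiv P Q).toReal := by
      rcases le_or_gt K 0 with h | h
      · linarith
      · rw [hKval, ENNReal.toReal_ofReal h.le]
    suffices hmain : Real.exp (-(1 / Real.exp 1)) * Real.exp (-(KLdiv P Q).toReal)
        ≤ 1 - p + q by linarith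
    by_cases hQA : Q A = 0
    · have hPA : P A = 0 := hPQ hQA
      have hpz : p = 0 := by rw [hpdef, hPA]; simp
      have hqz : q = 0 := by rw [hqdef, hQA]; simp
      rw [hpz, hqz]
      have h1 : Real.exp (-(1 / Real.exp 1)) ≤ 1 := by
        rw [Real.exp_le_one_iff]
        have : (0:ℝ) < 1 / Real.exp 1 := by positivity
        linarith
      have h2 : Real.exp (-(KLdiv P Q).toReal) ≤ 1 := by
        rw [Real.exp_le_one_iff]; linarith
      calc Real.exp (-(1 / Real.exp 1)) * Real.exp (-(KLdiv P Q).toReal)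
          ≤ 1 * 1 := mul_le_mul h1 h2 (Real.exp_pos _).le one_pos.le
        _ = 1 := by ring
        _ ≤ 1 - 0 + 0 := by norm_num
    · have hqpos : 0 < q := ENNReal.toReal_pos hQA (measure_ne_top _ _)
      -- bound on A
      have hb1 : p * Real.log p - p * Real.log q
          ≤ ∫ ω in A, Real.log (P.rnDeriv Q ω).toReal ∂P :=
        jensen_restrict P Q hPQ hint hA hQA
      -- bound on Aᶜ
      have hb2 : -(1 / Real.exp 1) ≤ ∫ ω in Aᶜ, Real.log (P.rnDeriv Q ω).toReal ∂P := by
        by_cases hQAc : Q Aᶜ = 0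
        · have hPAc : P Aᶜ = 0 := hPQ hQAc
          have hres : P.restrict Aᶜ = 0 := by rwa [Measure.restrict_eq_zero]
          rw [show (∫ ω in Aᶜ, Real.log (P.rnDeriv Q ω).toReal ∂P)
              = ∫ ω, Real.log (P.rnDeriv Q ω).toReal ∂(P.restrict Aᶜ) from rfl, hres]
          simp only [integral_zero_measure]
          have : (0:ℝ) < 1 / Real.exp 1 := by positivity
          linarith
        · have hb := jensen_restrict P Q hPQ hint hA.compl hQAc
          set p' : ℝ := (P Aᶜ).toReal
          set q' : ℝ := (Q Aᶜ).toReal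
          have hp'0 : 0 ≤ p' := ENNReal.toReal_nonneg
          have hq'1 : q' ≤ 1 := by
            rw [show (1:ℝ) = (1:ℝ≥0∞).toReal by simp]
            exact ENNReal.toReal_mono ENNReal.one_ne_top prob_le_one
          have hlogq' : Real.log q' ≤ 0 := Real.log_nonpos ENNReal.toReal_nonneg hq'1
          have h1 : -(1 / Real.exp 1) ≤ p' * Real.log p' := neg_inv_exp_le_mul_log hp'0
          have h2 : p' * Real.log q' ≤ 0 := mul_nonpos_of_nonneg_of_nonpos hp'0 hlogq'
          linarith
      have hsum : (∫ ω in A, Real.log (P.rnDeriv Q ω).toReal ∂P)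
          + ∫ ω in Aᶜ, Real.log (P.rnDeriv Q ω).toReal ∂P = K :=
        integral_add_compl hA hint
      have hKlow : p * Real.log p - p * Real.log q - 1 / Real.exp 1 ≤ K := by linarith
      have hexp : Real.exp (-(KLdiv P Q).toReal)
          ≤ Real.exp (-(p * Real.log p - p * Real.log q - 1 / Real.exp 1)) := by
        apply Real.exp_le_exp.mpr
        have : p * Real.log p - p * Real.log q - 1 / Real.exp 1 ≤ (KLdiv P Q).toReal :=
          le_trans hKlow hKle
        linarith
      calc Real.exp (-(1 / Real.exp 1)) * Real.exp (-(KLdiv P Q).toReal)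
          ≤ Real.exp (-(1 / Real.exp 1)) *
            Real.exp (-(p * Real.log p - p * Real.log q - 1 / Real.exp 1)) := by
            exact mul_le_mul_of_nonneg_left hexp (Real.exp_pos _).le
        _ = Real.exp (p * Real.log q - p * Real.log p) := by
            rw [← Real.exp_add]; ring_nf
        _ ≤ 1 - p + q := exp_mul_log_le hp0 hp1 hqpos
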